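/- Fix r ∈ (0,1) and q with 0 < q < 3r²/(2 + r), and let F be as defined. Suppose g₀ ∈ (0,1) satisfies F(g₀, q) = 0 and F(g, q) > 0 for all g ∈ (g₀, 1). Then there exists a differentiable function g : [0,∞) → ℝ with g(0) = g₀, g'(η) = √(F(g(η), q)) for all η ≥ 0, g strictly increasing on [0,∞), g(η) < 1 for all η, and g(η) → 1 as η → ∞. -/

import Mathlib

set_option maxHeartbeats 1000000
open Set intervalIntegral


open Filter

/-- The integration constant `C(q)` (for fixed `r`). -/
noncomputable def Ccoef (r q : ℝ) : ℝ := r * (3 * r ^ 2 - q * (2 + r)) / ((1 - r) * (4 - r ^ 2))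

/-- The right-hand side `F(g,q)` of the reduced first-order ODE (for fixed `r`). -/
noncomputable def Ffun (r q g : ℝ) : ℝ :=
  (1 - q) / (1 - r) * g ^ (2 - 2 * r) - 2 * (3 - q) / (2 - r) * g ^ (2 - r)
    + 3 * g ^ (2 : ℝ) - 2 / (2 + r) * g ^ (2 + r) - Ccoef r q

/-- Problem A, soliton profile: if `g₀ ∈ (0,1)` is a zero of `F(·,q)` with
`F(·,q) > 0` on `(g₀,1)`, then the Cauchy problem `g' = √F(g,q)`, `g(0) = g₀` has a solution
on `[0,∞)` which is strictly increasing, stays below `1`, and tends to `1` at infinity. -/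
lemma Ffun_one (r q : ℝ) (hr0 : 0 < r) (hr1 : r < 1) : Ffun r q 1 = 0 := by
  have h1 : (1:ℝ) - r ≠ 0 := by nlinarith
  have h2 : (2:ℝ) - r ≠ 0 := by nlinarith
  have h3 : (2:ℝ) + r ≠ 0 := by nlinarith
  have h4 : (4:ℝ) - r ^ 2 ≠ 0 := by nlinarith
  simp only [Ffun, Ccoef, Real.one_rpow]
  field_simp
  ring

lemma Ffun_hasDerivAt (r q g : ℝ) (hr0 : 0 < r) (hr1 : r < 1) (hg : 0 < g) :
    HasDerivAt (Ffun r q)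
      (2 * g ^ (1 - 2*r) * (1 - g ^ r) * ((1 - g ^ r) ^ 2 - q)) g := by
  have hgne : g ≠ 0 := ne_of_gt hg
  have h1 : (1:ℝ) - r ≠ 0 := by nlinarith
  have h2 : (2:ℝ) - r ≠ 0 := by nlinarith
  have h3 : (2:ℝ) + r ≠ 0 := by nlinarith
  have d1 := Real.hasDerivAt_rpow_const (x := g) (p := 2 - 2*r) (Or.inl hgne)
  have d2 := Real.hasDerivAt_rpow_const (x := g) (p := 2 - r) (Or.inl hgne)
  have d3 := Real.hasDerivAt_rpow_const (x := g) (p := (2:ℝ)) (Or.inl hgne)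
  have d4 := Real.hasDerivAt_rpow_const (x := g) (p := 2 + r) (Or.inl hgne)
  have hD : HasDerivAt (Ffun r q)
      (2*(1-q) * g ^ (1-2*r) - 2*(3-q) * g ^ (1-r) + 6 * g - 2 * g ^ (1+r)) g := by
    have h := ((((d1.const_mul ((1 - q) / (1 - r))).sub
        (d2.const_mul (2 * (3 - q) / (2 - r)))).add
        (d3.const_mul (3:ℝ))).sub (d4.const_mul (2 / (2 + r)))).sub_const (Ccoef r q)
    refine h.congr_deriv ?_
    rw [show (2:ℝ) - 2*r - 1 = 1 - 2*r by ring, show (2:ℝ) - r - 1 = 1 - r by ring,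
      show (2:ℝ) - 1 = (1:ℝ) by norm_num, show (2:ℝ) + r - 1 = 1 + r by ring, Real.rpow_one]
    field_simp
    ring
  convert hD using 1
  have hx1 : g ^ (1 - 2*r) * g ^ r = g ^ (1 - r) := by
    rw [← Real.rpow_add hg, show 1 - 2*r + r = 1 - r by ring]
  have hx2 : g ^ (1 - 2*r) * g ^ r * g ^ r = g := by
    rw [← Real.rpow_add hg, ← Real.rpow_add hg, show 1 - 2*r + r + r = (1:ℝ) by ring,
      Real.rpow_one]
  have hx3 : g ^ (1 - 2*r) * g ^ r * g ^ r * g ^ r = g ^ (1 + r) := by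
    rw [← Real.rpow_add hg, ← Real.rpow_add hg, ← Real.rpow_add hg,
      show 1 - 2*r + r + r + r = 1 + r by ring]
  linear_combination (-2*(3-q)) * hx1 + 6 * hx2 + (-2) * hx3

private lemma mono_aux {a b : ℝ} {G G' : ℝ → ℝ}
    (hd : ∀ x ∈ Icc a b, HasDerivAt G (G' x) x)
    (h0 : ∀ x ∈ Ioo a b, 0 ≤ G' x) : MonotoneOn G (Icc a b) := by
  apply monotoneOn_of_deriv_nonneg (convex_Icc a b)
  · exact fun x hx => (hd x hx).continuousAt.continuousWithinAt
  · intro x hx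
    rw [interior_Icc] at hx
    exact (hd x (Ioo_subset_Icc_self hx)).differentiableAt.differentiableWithinAt
  · intro x hx
    rw [interior_Icc] at hx
    rw [(hd x (Ioo_subset_Icc_self hx)).deriv]
    exact h0 x hx


theorem gmKdV_soliton_profile_existence
    (r q : ℝ) (hr : r ∈ Set.Ioo (0 : ℝ) 1)
    (hq0 : 0 < q) (hq1 : q < 3 * r ^ 2 / (2 + r))
    (g₀ : ℝ) (hg₀ : g₀ ∈ Set.Ioo (0 : ℝ) 1)
    (hzero : Ffun r q g₀ = 0)
    (hFpos : ∀ g ∈ Set.Ioo g₀ 1, 0 < Ffun r q g) :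
    ∃ g : ℝ → ℝ,
      g 0 = g₀
      ∧ (∀ η : ℝ, 0 ≤ η →
          HasDerivWithinAt g (Real.sqrt (Ffun r q (g η))) (Set.Ici 0) η)
      ∧ StrictMonoOn g (Set.Ici 0)
      ∧ (∀ η : ℝ, 0 ≤ η → g η < 1)
      ∧ Tendsto g atTop (nhds 1) := by
  obtain ⟨hr0, hr1⟩ := hr
  obtain ⟨hg00, hg01⟩ := hg₀
  set f : ℝ → ℝ := Ffun r q with hf_def
  set D : ℝ → ℝ := fun x => 2 * x ^ (1 - 2*r) * (1 - x ^ r) * ((1 - x ^ r) ^ 2 - q) with hD_def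
  have hD : ∀ x : ℝ, 0 < x → HasDerivAt f (D x) x :=
    fun x hx => Ffun_hasDerivAt r q x hr0 hr1 hx
  have hf1 : f 1 = 0 := Ffun_one r q hr0 hr1
  -- basic sign facts for the derivative factorization
  have hxr_lt1 : ∀ x : ℝ, 0 ≤ x → x < 1 → x ^ r < 1 := fun x h0 h1 => Real.rpow_lt_one h0 h1 hr0
  have hxr_mono : ∀ x y : ℝ, 0 ≤ x → x < y → x ^ r < y ^ r :=
    fun x y h0 hxy => Real.rpow_lt_rpow h0 hxy hr0
  have hDcont : ∀ s : Set ℝ, (∀ x ∈ s, 0 < x) → ContinuousOn D s := by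
    intro s hs x hx
    have hx0 : 0 < x := hs x hx
    apply ContinuousAt.continuousWithinAt
    have c1 : ContinuousAt (fun x : ℝ => x ^ (1 - 2*r)) x :=
      Real.continuousAt_rpow_const _ _ (Or.inl hx0.ne')
    have c2 : ContinuousAt (fun x : ℝ => x ^ r) x :=
      Real.continuousAt_rpow_const _ _ (Or.inl hx0.ne')
    exact ((continuousAt_const.mul c1).mul (continuousAt_const.sub c2)).mul
      (((continuousAt_const.sub c2).pow 2).sub continuousAt_const)
  -- Step 1 : q < (1 - g₀^r)^2
  have hkey : q < (1 - g₀ ^ r) ^ 2 := by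
    by_contra hcon
    push_neg at hcon
    set y : ℝ := (g₀ + 1) / 2 with hy_def
    have hy1 : g₀ < y := by rw [hy_def]; linarith
    have hy2 : y < 1 := by rw [hy_def]; linarith
    have hanti : StrictAntiOn f (Icc g₀ y) := by
      apply strictAntiOn_of_deriv_neg (convex_Icc _ _)
      · intro x hx
        exact (hD x (lt_of_lt_of_le hg00 hx.1)).continuousAt.continuousWithinAt
      · intro x hx
        rw [interior_Icc] at hx
        have hx0 : 0 < x := lt_trans hg00 hx.1
        rw [(hD x hx0).deriv, hD_def]
        dsimp only
        have h1 : 0 < x ^ (1 - 2*r) := Real.rpow_pos_of_pos hx0 _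
        have h2 : x ^ r < 1 := hxr_lt1 x hx0.le (lt_trans hx.2 hy2)
        have h3 : g₀ ^ r < x ^ r := hxr_mono g₀ x hg00.le hx.1
        have h4 : 0 ≤ g₀ ^ r := (Real.rpow_pos_of_pos hg00 r).le
        have h5 : (1 - x ^ r) ^ 2 - q < 0 := by nlinarith
        have h6 : 0 < 1 - x ^ r := by linarith
        nlinarith [mul_pos (mul_pos (mul_pos two_pos h1) h6) (neg_pos.2 h5)]
    have hlt : f y < f g₀ := hanti (left_mem_Icc.2 hy1.le) ⟨hy1.le, le_refl y⟩ hy1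
    rw [hzero] at hlt
    exact absurd (hFpos y ⟨hy1, hy2⟩) (by linarith)
  -- Step 2 : choose m ∈ (g₀, 1) with q < (1 - m^r)^2
  obtain ⟨m, hm0, hm1, hmq⟩ : ∃ m : ℝ, g₀ < m ∧ m < 1 ∧ q < (1 - m ^ r) ^ 2 := by
    have hc : ContinuousAt (fun x : ℝ => (1 - x ^ r) ^ 2) g₀ := by
      have c2 : ContinuousAt (fun x : ℝ => x ^ r) g₀ :=
        Real.continuousAt_rpow_const _ _ (Or.inl hg00.ne')
      exact (continuousAt_const.sub c2).pow 2
    have hev : {x : ℝ | q < (1 - x ^ r) ^ 2} ∈ nhds g₀ := hc (Ioi_mem_nhds hkey)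
    obtain ⟨ε, hε, hball⟩ := Metric.mem_nhds_iff.1 hev
    refine ⟨min (g₀ + ε/2) ((g₀ + 1)/2), ?_, ?_, ?_⟩
    · apply lt_min <;> linarith
    · exact lt_of_le_of_lt (min_le_right _ _) (by linarith)
    · apply hball
      simp only [Metric.mem_ball, Real.dist_eq]
      have h1 : g₀ < min (g₀ + ε/2) ((g₀ + 1)/2) := by apply lt_min <;> linarith
      have h2 : min (g₀ + ε/2) ((g₀ + 1)/2) ≤ g₀ + ε/2 := min_le_left _ _
      rw [abs_lt]; constructor <;> [linarith; linarith]
  have hm00 : 0 < m := lt_trans hg00 hm0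
  -- min and max of D on [g₀, m]
  obtain ⟨xmin, hxmin_mem, hxmin⟩ :=
    isCompact_Icc.exists_isMinOn (nonempty_Icc.2 hm0.le)
      (hDcont (Icc g₀ m) (fun x hx => lt_of_lt_of_le hg00 hx.1))
  obtain ⟨xmax, hxmax_mem, hxmax⟩ :=
    isCompact_Icc.exists_isMaxOn (nonempty_Icc.2 hm0.le)
      (hDcont (Icc g₀ m) (fun x hx => lt_of_lt_of_le hg00 hx.1))
  have hDpos : ∀ x ∈ Icc g₀ m, 0 < D x := by
    intro x hx
    have hx0 : 0 < x := lt_of_lt_of_le hg00 hx.1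
    have hx1 : x < 1 := lt_of_le_of_lt hx.2 hm1
    have h1 : 0 < x ^ (1 - 2*r) := Real.rpow_pos_of_pos hx0 _
    have h2 : x ^ r < 1 := hxr_lt1 x hx0.le hx1
    have h3 : x ^ r ≤ m ^ r := by
      rcases eq_or_lt_of_le hx.2 with h | h
      · rw [h]
      · exact (hxr_mono x m hx0.le h).le
    have h4 : m ^ r < 1 := hxr_lt1 m hm00.le hm1
    have h5 : q < (1 - x ^ r) ^ 2 := by nlinarith
    have h6 : 0 < 1 - x ^ r := by linarith
    have := mul_pos (mul_pos (mul_pos two_pos h1) h6) (by linarith : (0:ℝ) < (1 - x ^ r) ^ 2 - q)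
    rw [hD_def]; dsimp only; nlinarith [this]
  obtain ⟨c, hc_pos, hDc⟩ : ∃ c : ℝ, 0 < c ∧ ∀ t ∈ Icc g₀ m, c ≤ D t :=
    ⟨D xmin, hDpos xmin hxmin_mem, fun t ht => hxmin ht⟩
  obtain ⟨M, hM_pos, hDM⟩ : ∃ M : ℝ, 0 < M ∧ ∀ t ∈ Icc g₀ m, D t ≤ M :=
    ⟨D xmax, hDpos xmax hxmax_mem, fun t ht => hxmax ht⟩
  -- linear bounds near g₀
  have hlin_low : ∀ t ∈ Icc g₀ m, c * (t - g₀) ≤ f t := by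
    have hmono : MonotoneOn (fun t => f t - c * (t - g₀)) (Icc g₀ m) := by
      apply mono_aux (G' := fun x => D x - c)
      · intro x hx
        exact (hD x (lt_of_lt_of_le hg00 hx.1)).sub
          (((hasDerivAt_id x).sub_const g₀).const_mul c |>.congr_deriv (by ring))
      · intro x hx
        have := hDc x (Ioo_subset_Icc_self hx)
        linarith
    intro t ht
    have := hmono (left_mem_Icc.2 hm0.le) ht ht.1
    simp only [sub_self, mul_zero, sub_zero] at this
    rw [hzero] at this
    linarith
  have hlin_up : ∀ t ∈ Icc g₀ m, f t ≤ M * (t - g₀) := by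
    have hmono : MonotoneOn (fun t => M * (t - g₀) - f t) (Icc g₀ m) := by
      apply mono_aux (G' := fun x => M - D x)
      · intro x hx
        exact ((((hasDerivAt_id x).sub_const g₀).const_mul M).congr_deriv (by ring)).sub
          (hD x (lt_of_lt_of_le hg00 hx.1))
      · intro x hx
        have := hDM x (Ioo_subset_Icc_self hx)
        linarith
    intro t ht
    have := hmono (left_mem_Icc.2 hm0.le) ht ht.1
    simp only [sub_self, mul_zero, zero_sub, neg_le_sub_iff_le_add] at this
    rw [hzero] at this
    linarith
  -- quadratic bound near 1
  obtain ⟨s₁, hs₁m, hs₁h, hs₁1⟩ : ∃ s₁ : ℝ, m ≤ s₁ ∧ (1/2:ℝ) ≤ s₁ ∧ s₁ < 1 :=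
    ⟨max m (1/2), le_max_left _ _, le_max_right _ _, max_lt hm1 (by norm_num)⟩
  have hs₁g : g₀ < s₁ := lt_of_lt_of_le hm0 hs₁m
  have hs₁0 : 0 < s₁ := by linarith
  obtain ⟨B, hB_pos, hBd⟩ : ∃ B : ℝ, 0 < B ∧ ∀ s ∈ Icc s₁ 1, 0 ≤ D s + B * (1 - s) := by
    obtain ⟨K, hK1, hKs⟩ : ∃ K : ℝ, 1 ≤ K ∧ ∀ s : ℝ, 1/2 ≤ s → s ≤ 1 → s ^ (1 - 2*r) ≤ K := by
      refine ⟨max 1 ((1/2 : ℝ) ^ (1 - 2*r)), le_max_left _ _, ?_⟩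
      intro s hsh hs1
      have hs0 : (0:ℝ) < s := by linarith
      rcases le_or_gt 0 (1 - 2*r) with hcase | hcase
      · exact le_trans (Real.rpow_le_one hs0.le hs1 hcase) (le_max_left _ _)
      · exact le_trans (Real.rpow_le_rpow_of_nonpos (by norm_num) hsh hcase.le)
          (le_max_right _ _)
    have hK0 : (0:ℝ) < K := by linarith
    refine ⟨2 * K * q, by positivity, ?_⟩
    intro s hs
    have hs0 : 0 < s := lt_of_lt_of_le hs₁0 hs.1
    have hsh : (1/2 : ℝ) ≤ s := le_trans hs₁h hs.1
    have hs1 : s ≤ 1 := hs.2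
    have h1 : s ^ (1 - 2*r) ≤ K := hKs s hsh hs1
    have h2 : s ≤ s ^ r := by
      have := Real.rpow_le_rpow_of_exponent_ge hs0 hs1 hr1.le
      rwa [Real.rpow_one] at this
    have h3 : s ^ r ≤ 1 := Real.rpow_le_one hs0.le hs1 hr0.le
    have h4 : 0 < s ^ (1 - 2*r) := Real.rpow_pos_of_pos hs0 _
    rw [hD_def]; dsimp only
    rcases le_or_gt q ((1 - s ^ r) ^ 2) with hcase | hcase
    · have ht1 : 0 ≤ 2 * s ^ (1 - 2*r) * (1 - s ^ r) * ((1 - s ^ r) ^ 2 - q) :=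
        mul_nonneg (mul_nonneg (by positivity) (by linarith)) (by linarith)
      have ht2 : 0 ≤ 2 * K * q * (1 - s) := by
        have : (0:ℝ) ≤ 2 * K * q := by positivity
        exact mul_nonneg this (by linarith)
      linarith
    · have e0 : 0 ≤ 1 - s ^ r := by linarith
      have e1 : 2 * s ^ (1 - 2*r) * (1 - s ^ r) * (q - (1 - s ^ r) ^ 2)
          ≤ 2 * s ^ (1 - 2*r) * (1 - s ^ r) * q := by
        linarith only [mul_nonneg (mul_nonneg (mul_nonneg (by norm_num : (0:ℝ) ≤ 2) h4.le) e0)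
          (sq_nonneg (1 - s ^ r))]
      have e2 : s ^ (1 - 2*r) * (1 - s ^ r) ≤ K * (1 - s) :=
        mul_le_mul h1 (by linarith) e0 (by linarith)
      have e3 : 2 * s ^ (1 - 2*r) * (1 - s ^ r) * q ≤ 2 * K * (1 - s) * q := by
        have := mul_le_mul_of_nonneg_right e2 hq0.le
        linarith only [this]
      linarith only [e1, e3]
  have hquad : ∀ t ∈ Icc s₁ 1, f t ≤ (B/2) * (1 - t) ^ 2 := by
    have hmono : MonotoneOn (fun t => f t - (B/2) * (1 - t) ^ 2) (Icc s₁ 1) := by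
      apply mono_aux (G' := fun x => D x + B * (1 - x))
      · intro x hx
        have hx0 : 0 < x := lt_of_lt_of_le hs₁0 hx.1
        have hd2 : HasDerivAt (fun t : ℝ => (B/2) * (1 - t) ^ 2) (-(B * (1 - x))) x := by
          have := (((hasDerivAt_id x).const_sub 1).pow 2).const_mul (B/2)
          refine this.congr_deriv ?_
          simp only [pow_one, id_eq]
          ring
        exact ((hD x hx0).sub hd2).congr_deriv (by ring)
      · intro x hx
        exact hBd x (Ioo_subset_Icc_self hx)
    intro t ht
    have := hmono ht (right_mem_Icc.2 (by linarith)) ht.2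
    dsimp only at this
    rw [hf1] at this
    norm_num at this
    linarith only [this]
  -- the function h and its primitive Φ
  set h : ℝ → ℝ := fun t => (Real.sqrt (f t))⁻¹ with hh_def
  have hh_nonneg : ∀ t, 0 ≤ h t := fun t => inv_nonneg.2 (Real.sqrt_nonneg _)
  have hh_pos : ∀ t, g₀ < t → t < 1 → 0 < h t := by
    intro t h1 h2
    have := hFpos t ⟨h1, h2⟩
    exact inv_pos.2 (Real.sqrt_pos.2 this)
  have hmeas : Measurable h := by
    have hf : Measurable f := by
      rw [hf_def]; unfold Ffun Ccoef; fun_prop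
    exact (Real.continuous_sqrt.measurable.comp hf).inv
  have hcont_h : ∀ t, g₀ < t → t < 1 → ContinuousAt h t := by
    intro t h1 h2
    have ht0 : 0 < t := lt_trans hg00 h1
    have hft : 0 < f t := hFpos t ⟨h1, h2⟩
    have hcf : ContinuousAt f t := (hD t ht0).continuousAt
    exact (Real.continuous_sqrt.continuousAt.comp hcf).inv₀ (Real.sqrt_pos.2 hft).ne'
  -- integrability
  have hInt1 : IntervalIntegrable h MeasureTheory.volume g₀ m := by
    have hcmp : IntervalIntegrable (fun t => (Real.sqrt c)⁻¹ * ((t - g₀) ^ (-(1/2) : ℝ)))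
        MeasureTheory.volume g₀ m := by
      have h0 : IntervalIntegrable (fun t : ℝ => t ^ (-(1/2) : ℝ))
          MeasureTheory.volume (g₀ - g₀) (m - g₀) :=
        intervalIntegrable_rpow' (by norm_num)
      have := (h0.comp_sub_right g₀)
      simp only [sub_add_cancel] at this
      exact this.const_mul _
    apply hcmp.mono_fun hmeas.aestronglyMeasurable
    rw [uIoc_of_le hm0.le]
    refine (MeasureTheory.ae_restrict_iff' measurableSet_Ioc).2 ?_
    filter_upwards with t ht
    have ht1 : g₀ < t := ht.1
    have ht2 : t ≤ m := ht.2
    have hft : c * (t - g₀) ≤ f t := hlin_low t ⟨ht1.le, ht2⟩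
    have hct : 0 < c * (t - g₀) := mul_pos hc_pos (by linarith)
    have hsq : Real.sqrt (c * (t - g₀)) ≤ Real.sqrt (f t) := Real.sqrt_le_sqrt hft
    have hsqpos : 0 < Real.sqrt (c * (t - g₀)) := Real.sqrt_pos.2 hct
    have hinv : (Real.sqrt (f t))⁻¹ ≤ (Real.sqrt (c * (t - g₀)))⁻¹ :=
      inv_anti₀ hsqpos hsq
    have heq : (Real.sqrt (c * (t - g₀)))⁻¹ = (Real.sqrt c)⁻¹ * ((t - g₀) ^ (-(1/2) : ℝ)) := by
      rw [Real.sqrt_mul hc_pos.le, mul_inv, Real.rpow_neg (by linarith),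
        show ((1:ℝ)/2) = (1/2 : ℝ) by norm_num, ← Real.sqrt_eq_rpow]
    rw [Real.norm_eq_abs, Real.norm_eq_abs, abs_of_nonneg (hh_nonneg t),
      abs_of_nonneg (mul_nonneg (inv_nonneg.2 (Real.sqrt_nonneg c))
        (Real.rpow_nonneg (show (0:ℝ) ≤ t - g₀ by linarith) _))]
    rw [hh_def]; dsimp only
    rw [← heq]; exact hinv
  have hInt : ∀ y ∈ Ico g₀ 1, IntervalIntegrable h MeasureTheory.volume g₀ y := by
    intro y hy
    rcases le_total y m with hym | hmy
    · refine hInt1.mono_set ?_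
      rw [uIcc_of_le hy.1, uIcc_of_le hm0.le]
      exact Icc_subset_Icc_right hym
    · refine hInt1.trans ?_
      apply ContinuousOn.intervalIntegrable
      rw [uIcc_of_le hmy]
      intro t ht
      exact (hcont_h t (lt_of_lt_of_le hm0 ht.1) (lt_of_le_of_lt ht.2 hy.2)).continuousWithinAt
  set Φ : ℝ → ℝ := fun y => ∫ t in g₀..y, h t with hΦ_def
  have hΦg₀ : Φ g₀ = 0 := integral_same
  have hΦd : ∀ y ∈ Ioo g₀ 1, HasDerivAt Φ (h y) y := by
    intro y hy
    exact intervalIntegral.integral_hasDerivAt_right (hInt y ⟨hy.1.le, hy.2⟩)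
      (hmeas.stronglyMeasurable.stronglyMeasurableAtFilter) (hcont_h y hy.1 hy.2)
  have hΦmono : StrictMonoOn Φ (Ico g₀ 1) := by
    intro y₁ h₁ y₂ h₂ h12
    have i1 := hInt y₁ h₁
    have i2 := hInt y₂ h₂
    have hdiff : Φ y₂ - Φ y₁ = ∫ t in y₁..y₂, h t := integral_interval_sub_left i2 i1
    have hpos : 0 < ∫ t in y₁..y₂, h t := by
      apply intervalIntegral_pos_of_pos_on (i1.symm.trans i2) _ h12
      intro x hx
      exact hh_pos x (lt_of_le_of_lt h₁.1 hx.1) (lt_trans hx.2 h₂.2)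
    linarith
  have hΦcont : ∀ y ∈ Ico g₀ 1, ContinuousOn Φ (Icc g₀ y) := by
    intro y hy
    have := intervalIntegral.continuousOn_primitive_interval' (hInt y hy)
      (by rw [uIcc_of_le hy.1]; exact left_mem_Icc.2 hy.1)
    rwa [uIcc_of_le hy.1] at this
  -- unboundedness of Φ
  have hΦunbdd : ∀ K₀ : ℝ, ∃ y, g₀ < y ∧ y < 1 ∧ K₀ < Φ y := by
    intro K₀
    set A : ℝ := (Real.sqrt (B/2))⁻¹ with hA_def
    have hA_pos : 0 < A := inv_pos.2 (Real.sqrt_pos.2 (by linarith))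
    have hlower : ∀ y, s₁ ≤ y → y < 1 →
        Φ s₁ + A * (Real.log (1 - s₁) - Real.log (1 - y)) ≤ Φ y := by
      intro y hsy hy1
      have hyI : y ∈ Ico g₀ 1 := ⟨le_trans hs₁g.le hsy, hy1⟩
      have hs₁I : s₁ ∈ Ico g₀ 1 := ⟨hs₁g.le, hs₁1⟩
      have hdiff : Φ y - Φ s₁ = ∫ t in s₁..y, h t :=
        integral_interval_sub_left (hInt y hyI) (hInt s₁ hs₁I)
      have hptwise : ∀ t ∈ Icc s₁ y, A * (1 - t)⁻¹ ≤ h t := by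
        intro t ht
        have ht1 : t < 1 := lt_of_le_of_lt ht.2 hy1
        have htg : g₀ < t := lt_of_lt_of_le hs₁g ht.1
        have hft : 0 < f t := hFpos t ⟨htg, ht1⟩
        have hfq : f t ≤ (B/2) * (1 - t) ^ 2 := hquad t ⟨ht.1, ht1.le⟩
        have hsq : Real.sqrt (f t) ≤ Real.sqrt (B/2) * (1 - t) := by
          have := Real.sqrt_le_sqrt hfq
          rwa [Real.sqrt_mul (by linarith : (0:ℝ) ≤ B/2), Real.sqrt_sq (by linarith)] at this
        have hsf : 0 < Real.sqrt (f t) := Real.sqrt_pos.2 hft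
        have := inv_anti₀ hsf hsq
        rw [mul_inv] at this
        rw [hh_def]; dsimp only
        rwa [hA_def]
      have hint_low : IntervalIntegrable (fun t => A * (1 - t)⁻¹)
          MeasureTheory.volume s₁ y := by
        apply ContinuousOn.intervalIntegrable
        rw [uIcc_of_le hsy]
        intro t ht
        have ht1 : t < 1 := lt_of_le_of_lt ht.2 hy1
        exact (continuousAt_const.mul
          ((continuousAt_const.sub continuousAt_id).inv₀
            (by intro hc; simp only [Pi.sub_apply, id_eq] at hc; linarith))).continuousWithinAt
      have hmono_int : ∫ t in s₁..y, A * (1 - t)⁻¹ ≤ ∫ t in s₁..y, h t := by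
        apply intervalIntegral.integral_mono_on hsy hint_low
          ((hInt s₁ hs₁I).symm.trans (hInt y hyI)) hptwise
      have hcalc : ∫ t in s₁..y, A * (1 - t)⁻¹
          = A * (Real.log (1 - s₁) - Real.log (1 - y)) := by
        rw [intervalIntegral.integral_const_mul]
        congr 1
        have := intervalIntegral.integral_comp_sub_left (a := s₁) (b := y)
          (fun x : ℝ => x⁻¹) 1
        rw [this, integral_inv]
        · rw [Real.log_div (by linarith) (by linarith)]
        · rw [uIcc_of_le (by linarith : 1 - y ≤ 1 - s₁)]
          intro hc
          have := hc.1
          linarith [hc.1]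
      rw [hcalc] at hmono_int
      linarith
    set ε : ℝ := min ((1 - s₁)/2)
      (Real.exp (Real.log (1 - s₁) - (K₀ - Φ s₁ + 1)/A)) with hε_def
    have hε_pos : 0 < ε := lt_min (by linarith) (Real.exp_pos _)
    set y : ℝ := 1 - ε with hy_def
    have hy1 : y < 1 := by rw [hy_def]; linarith
    have hys : s₁ ≤ y := by
      have : ε ≤ (1 - s₁)/2 := min_le_left _ _
      rw [hy_def]; linarith
    refine ⟨y, lt_of_lt_of_le hs₁g hys, hy1, ?_⟩
    have hlog : Real.log (1 - y) ≤ Real.log (1 - s₁) - (K₀ - Φ s₁ + 1)/A := by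
      have h1 : 1 - y = ε := by rw [hy_def]; ring
      rw [h1]
      calc Real.log ε ≤ Real.log (Real.exp (Real.log (1 - s₁) - (K₀ - Φ s₁ + 1)/A)) :=
            Real.log_le_log hε_pos (min_le_right _ _)
        _ = Real.log (1 - s₁) - (K₀ - Φ s₁ + 1)/A := Real.log_exp _
    have hmain := hlower y hys hy1
    have h2 : (K₀ - Φ s₁ + 1)/A ≤ Real.log (1 - s₁) - Real.log (1 - y) := by linarith
    have h3 : A * ((K₀ - Φ s₁ + 1)/A) ≤ A * (Real.log (1 - s₁) - Real.log (1 - y)) :=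
      mul_le_mul_of_nonneg_left h2 hA_pos.le
    rw [mul_div_cancel₀ _ hA_pos.ne'] at h3
    linarith
  -- existence of the inverse values
  have hex : ∀ η : ℝ, 0 ≤ η → ∃ y, y ∈ Ico g₀ 1 ∧ Φ y = η := by
    intro η hη
    obtain ⟨b, hb1, hb2, hbK⟩ := hΦunbdd η
    have hmem : η ∈ Icc (Φ g₀) (Φ b) := ⟨by rw [hΦg₀]; exact hη, hbK.le⟩
    obtain ⟨y, hy, hyeq⟩ := intermediate_value_Icc hb1.le (hΦcont b ⟨hb1.le, hb2⟩) hmem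
    exact ⟨y, ⟨hy.1, lt_of_le_of_lt hy.2 hb2⟩, hyeq⟩
  classical
  set G : ℝ → ℝ := fun η => if hη : 0 ≤ η then Classical.choose (hex η hη) else g₀ with hG_def
  have hGmem : ∀ η : ℝ, 0 ≤ η → G η ∈ Ico g₀ 1 := by
    intro η hη
    rw [hG_def]; dsimp only; rw [dif_pos hη]
    exact (Classical.choose_spec (hex η hη)).1
  have hGΦ : ∀ η : ℝ, 0 ≤ η → Φ (G η) = η := by
    intro η hη
    rw [hG_def]; dsimp only; rw [dif_pos hη]
    exact (Classical.choose_spec (hex η hη)).2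
  have hG0 : G 0 = g₀ := by
    apply hΦmono.injOn (hGmem 0 le_rfl) ⟨le_rfl, hg01⟩
    rw [hGΦ 0 le_rfl, hΦg₀]
  have hGmono : StrictMonoOn G (Ici 0) := by
    intro a ha b hb hab
    rcases lt_trichotomy (G a) (G b) with hlt | heq | hgt
    · exact hlt
    · exfalso
      have : a = b := by rw [← hGΦ a ha, ← hGΦ b hb, heq]
      exact absurd this (ne_of_lt hab)
    · exfalso
      have := hΦmono (hGmem b hb) (hGmem a ha) hgt
      rw [hGΦ a ha, hGΦ b hb] at this
      linarith
  have hGg₀lt : ∀ η : ℝ, 0 < η → g₀ < G η := by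
    intro η hη
    have h1 : Φ g₀ < Φ (G η) := by rw [hΦg₀, hGΦ η hη.le]; exact hη
    exact (hΦmono.lt_iff_lt ⟨le_rfl, hg01⟩ (hGmem η hη.le)).1 h1
  -- continuity of G for η > 0
  have hGcont : ∀ η : ℝ, 0 < η → ContinuousAt G η := by
    intro η hη
    rw [Metric.continuousAt_iff]
    intro ε hε
    set y : ℝ := G η with hy_def
    have hy : y ∈ Ioo g₀ 1 := ⟨hGg₀lt η hη, (hGmem η hη.le).2⟩
    set y₁ : ℝ := max (y - ε/2) ((g₀ + y)/2) with hy₁_def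
    have hy₁g : g₀ < y₁ := lt_of_lt_of_le (by linarith [hy.1]) (le_max_right _ _)
    have hy₁y : y₁ < y := max_lt (by linarith) (by linarith [hy.1])
    set y₂ : ℝ := min (y + ε/2) ((y + 1)/2) with hy₂_def
    have hy₂y : y < y₂ := lt_min (by linarith) (by linarith [hy.2])
    have hy₂1 : y₂ < 1 := lt_of_le_of_lt (min_le_right _ _) (by linarith [hy.2])
    have hy₁I : y₁ ∈ Ico g₀ 1 := ⟨hy₁g.le, lt_trans hy₁y hy.2⟩
    have hy₂I : y₂ ∈ Ico g₀ 1 := ⟨by linarith [hy.1], hy₂1⟩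
    have hyI : y ∈ Ico g₀ 1 := ⟨hy.1.le, hy.2⟩
    have h1 : Φ y₁ < η := by
      rw [← hGΦ η hη.le]
      exact hΦmono hy₁I hyI hy₁y
    have h2 : η < Φ y₂ := by
      rw [← hGΦ η hη.le]
      exact hΦmono hyI hy₂I hy₂y
    have hΦy₁0 : 0 ≤ Φ y₁ := by
      rcases eq_or_lt_of_le hy₁I.1 with heq | hlt
      · rw [← heq, hΦg₀]
      · have := hΦmono ⟨le_rfl, hg01⟩ hy₁I hlt
        rw [hΦg₀] at this
        exact this.le
    refine ⟨min (η - Φ y₁) (Φ y₂ - η), lt_min (by linarith) (by linarith), ?_⟩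
    intro η' hd
    rw [Real.dist_eq] at hd
    have hd1 : |η' - η| < η - Φ y₁ := lt_of_lt_of_le hd (min_le_left _ _)
    have hd2 : |η' - η| < Φ y₂ - η := lt_of_lt_of_le hd (min_le_right _ _)
    rw [abs_lt] at hd1 hd2
    have hη'1 : Φ y₁ < η' := by linarith
    have hη'2 : η' < Φ y₂ := by linarith
    have hη'0 : 0 ≤ η' := le_trans hΦy₁0 hη'1.le
    have hb1 : y₁ < G η' := by
      apply (hΦmono.lt_iff_lt hy₁I (hGmem η' hη'0)).1
      rwa [hGΦ η' hη'0]
    have hb2 : G η' < y₂ := by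
      apply (hΦmono.lt_iff_lt (hGmem η' hη'0) hy₂I).1
      rwa [hGΦ η' hη'0]
    rw [Real.dist_eq, abs_lt]
    constructor
    · have h3 : y - ε/2 ≤ y₁ := le_max_left _ _
      linarith
    · have h4 : y₂ ≤ y + ε/2 := min_le_left _ _
      linarith
  -- derivative of G for η > 0
  have hGderiv : ∀ η : ℝ, 0 < η → HasDerivAt G (Real.sqrt (f (G η))) η := by
    intro η hη
    have hy : G η ∈ Ioo g₀ 1 := ⟨hGg₀lt η hη, (hGmem η hη.le).2⟩
    have hfy : 0 < f (G η) := hFpos _ hy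
    have hd := hΦd (G η) hy
    have hne : h (G η) ≠ 0 := (hh_pos _ hy.1 hy.2).ne'
    have hev : ∀ᶠ η' in nhds η, Φ (G η') = η' := by
      filter_upwards [Ioi_mem_nhds hη] with η' hη'
      exact hGΦ η' (le_of_lt hη')
    have := HasDerivAt.of_local_left_inverse (hGcont η hη) hd hne hev
    have heq : (h (G η))⁻¹ = Real.sqrt (f (G η)) := by
      rw [hh_def]; dsimp only; rw [inv_inv]
    rwa [heq] at this
  -- derivative at 0 (within Ici 0)
  have hΦmI : m ∈ Ico g₀ 1 := ⟨hm0.le, hm1⟩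
  have hΦm_pos : 0 < Φ m := by
    have := hΦmono ⟨le_rfl, hg01⟩ hΦmI hm0
    rwa [hΦg₀] at this
  have hclaim : ∀ η : ℝ, 0 < η → η ≤ Φ m → G η - g₀ ≤ (M/4) * η ^ 2 := by
    intro η hη hηm
    set y : ℝ := G η with hy_def
    have hyg : g₀ < y := hGg₀lt η hη
    have hym : y ≤ m := by
      by_contra hcon
      push_neg at hcon
      have := hΦmono hΦmI (hGmem η hη.le) hcon
      rw [hGΦ η hη.le] at this
      linarith
    have hyI : y ∈ Ico g₀ 1 := hGmem η hη.le
    -- pointwise lower bound for h on [g₀, y]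
    have hptwise : ∀ t ∈ Icc g₀ y,
        (Real.sqrt M)⁻¹ * ((t - g₀) ^ (-(1/2) : ℝ)) ≤ h t := by
      intro t ht
      rcases eq_or_lt_of_le ht.1 with heq | hlt
      · rw [← heq, sub_self, Real.zero_rpow (by norm_num), mul_zero]
        exact hh_nonneg g₀
      · have htm : t ≤ m := le_trans ht.2 hym
        have ht1 : t < 1 := lt_of_le_of_lt htm hm1
        have hft : 0 < f t := hFpos t ⟨hlt, ht1⟩
        have hfu : f t ≤ M * (t - g₀) := hlin_up t ⟨ht.1, htm⟩
        have hsq : Real.sqrt (f t) ≤ Real.sqrt M * Real.sqrt (t - g₀) := by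
          have := Real.sqrt_le_sqrt hfu
          rwa [Real.sqrt_mul hM_pos.le] at this
        have hsf : 0 < Real.sqrt (f t) := Real.sqrt_pos.2 hft
        have hinv := inv_anti₀ hsf hsq
        rw [mul_inv] at hinv
        have heq2 : (Real.sqrt (t - g₀))⁻¹ = (t - g₀) ^ (-(1/2) : ℝ) := by
          rw [Real.rpow_neg (by linarith), ← Real.sqrt_eq_rpow]
        rw [heq2] at hinv
        rw [hh_def]; dsimp only
        exact hinv
    have hint_low : IntervalIntegrable
        (fun t => (Real.sqrt M)⁻¹ * ((t - g₀) ^ (-(1/2) : ℝ)))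
        MeasureTheory.volume g₀ y := by
      have h0 : IntervalIntegrable (fun t : ℝ => t ^ (-(1/2) : ℝ))
          MeasureTheory.volume (g₀ - g₀) (y - g₀) :=
        intervalIntegrable_rpow' (by norm_num)
      have := h0.comp_sub_right g₀
      simp only [sub_add_cancel] at this
      exact this.const_mul _
    have hmono_int : ∫ t in g₀..y, (Real.sqrt M)⁻¹ * ((t - g₀) ^ (-(1/2) : ℝ))
        ≤ ∫ t in g₀..y, h t :=
      intervalIntegral.integral_mono_on hyg.le hint_low (hInt y hyI) hptwise
    have hcalc : ∫ t in g₀..y, (Real.sqrt M)⁻¹ * ((t - g₀) ^ (-(1/2) : ℝ))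
        = (Real.sqrt M)⁻¹ * (2 * Real.sqrt (y - g₀)) := by
      rw [intervalIntegral.integral_const_mul]
      congr 1
      have hcs := intervalIntegral.integral_comp_sub_right (a := g₀) (b := y)
        (fun x : ℝ => x ^ (-(1/2) : ℝ)) g₀
      rw [hcs, sub_self, integral_rpow (Or.inl (by norm_num))]
      rw [Real.zero_rpow (by norm_num)]
      rw [show (-(1/2) : ℝ) + 1 = (1/2 : ℝ) by norm_num]
      rw [← Real.sqrt_eq_rpow]
      ring
    have hη_ge : (Real.sqrt M)⁻¹ * (2 * Real.sqrt (y - g₀)) ≤ η := by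
      rw [← hcalc]
      calc ∫ t in g₀..y, (Real.sqrt M)⁻¹ * ((t - g₀) ^ (-(1/2) : ℝ))
          ≤ ∫ t in g₀..y, h t := hmono_int
        _ = Φ y := rfl
        _ = η := by rw [hy_def, hGΦ η hη.le]
    have hsM : 0 < Real.sqrt M := Real.sqrt_pos.2 hM_pos
    have h5 : 2 * Real.sqrt (y - g₀) ≤ Real.sqrt M * η := by
      have := mul_le_mul_of_nonneg_left hη_ge hsM.le
      rwa [← mul_assoc, mul_inv_cancel₀ hsM.ne', one_mul] at this
    nlinarith [Real.sq_sqrt (by linarith : (0:ℝ) ≤ y - g₀),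
      Real.sq_sqrt hM_pos.le, Real.sqrt_nonneg (y - g₀), Real.sqrt_nonneg M]
  have hderiv0 : HasDerivWithinAt G (Real.sqrt (f (G 0))) (Ici 0) 0 := by
    have hval : Real.sqrt (f (G 0)) = 0 := by
      rw [hG0, hzero, Real.sqrt_zero]
    rw [hval, hasDerivWithinAt_iff_tendsto_slope, Set.Ici_sdiff_left]
    apply squeeze_zero' (g := fun t => (M/4) * t)
    · filter_upwards [self_mem_nhdsWithin] with t ht
      have ht0 : 0 < t := ht
      rw [slope_def_field, hG0]
      apply div_nonneg _ (by linarith)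
      have := (hGmem t ht0.le).1
      linarith
    · have hmem0 : (0:ℝ) ∈ Ico (0:ℝ) (Φ m) := ⟨le_rfl, hΦm_pos⟩
      filter_upwards [Ioc_mem_nhdsGT_of_mem hmem0] with t ht
      rw [slope_def_field, hG0]
      rw [div_le_iff₀ (by linarith [ht.1] : (0:ℝ) < t - 0)]
      have := hclaim t ht.1 ht.2
      nlinarith [this, ht.1]
    · have hT : Tendsto (fun t : ℝ => (M/4) * t) (nhds 0) (nhds 0) := by
        have h0 := ((continuous_const (y := M/4)).mul continuous_id).tendsto (0:ℝ)
        simpa [Pi.mul_def] using h0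
      exact hT.mono_left nhdsWithin_le_nhds
  -- limit at infinity
  have htends : Tendsto G atTop (nhds 1) := by
    rw [tendsto_order]
    constructor
    · intro a ha
      set y : ℝ := (max a g₀ + 1) / 2 with hy_def
      have hmax1 : max a g₀ < 1 := max_lt ha hg01
      have hyI : y ∈ Ico g₀ 1 := by
        constructor
        · rw [hy_def]; linarith [le_max_right a g₀]
        · rw [hy_def]; linarith
      have hay : a < y := by
        rw [hy_def]; linarith [le_max_left a g₀]
      filter_upwards [eventually_gt_atTop (max (Φ y) 0)] with η hη
      have hη0 : 0 < η := lt_of_le_of_lt (le_max_right _ _) hη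
      have hηy : Φ y < η := lt_of_le_of_lt (le_max_left _ _) hη
      by_contra hcon
      push_neg at hcon
      have hlt := hΦmono (hGmem η hη0.le) hyI (lt_of_le_of_lt hcon hay)
      rw [hGΦ η hη0.le] at hlt
      linarith
    · intro a ha
      filter_upwards with η
      rcases le_or_gt 0 η with hη | hη
      · exact lt_trans (hGmem η hη).2 ha
      · rw [hG_def]; dsimp only; rw [dif_neg (not_le.2 hη)]
        linarith
  refine ⟨G, hG0, ?_, hGmono, fun η hη => (hGmem η hη).2, htends⟩
  intro η hη
  rcases eq_or_lt_of_le hη with heq | hlt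
  · rw [← heq]
    exact hderiv0
  · exact (hGderiv η hlt).hasDerivWithinAt
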